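/- Let λ > 0 and assume that for every i the map ℓ_{y_i} : q ↦ ℓ(q, y_i) is differentiable on ℝ^{d_y}. Fix any θ ∈ ℝ^{d_θ}, and suppose (a, b, W) is a point at which all partial derivatives of the map (a,b,W) ↦ L̃(θ,a,b,W) with respect to the coordinates of a and b vanish (in particular, any local minimum of this map). Then a = 0. -/

import Mathlib

open scoped RealInnerProductSpace

noncomputable section

/-- The added neuron: `g(x; a, b, W)ₖ = aₖ · exp(⟨wₖ, x⟩ + bₖ)`. -/
def addedNeuron (dx dy : ℕ) (a b : EuclideanSpace ℝ (Fin dy))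
    (W : Fin dy → EuclideanSpace ℝ (Fin dx)) (x : EuclideanSpace ℝ (Fin dx)) :
    EuclideanSpace ℝ (Fin dy) :=
  WithLp.toLp 2 (fun k => a k * Real.exp (⟪W k, x⟫ + b k))

/-- Norm squared on Euclidean space is the sum of squares of coordinates. -/
lemma euclidean_norm_sq_eq_sum {dy : ℕ} (v : EuclideanSpace ℝ (Fin dy)) :
    ‖v‖ ^ 2 = ∑ j, (v j) ^ 2 := by
  rw [EuclideanSpace.norm_sq_eq]
  simp [Real.norm_eq_abs, sq_abs]

/-- Let `λ > 0` and each `ℓ_{y_i}` be differentiable. If all partial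
derivatives of `(a,b,W) ↦ L̃(θ,a,b,W)` with respect to the coordinates of `a` and of `b`
vanish at `(a, b, W)` (as at any local minimum), then `a = 0`. -/
theorem stationary_in_a_b_implies_a_eq_zero
    (m dx dy dθ : ℕ) (hm : 0 < m) (hdx : 0 < dx) (hdy : 0 < dy) (hdθ : 0 < dθ)
    (x : Fin m → EuclideanSpace ℝ (Fin dx))
    (y : Fin m → EuclideanSpace ℝ (Fin dy))
    (f : EuclideanSpace ℝ (Fin dx) → EuclideanSpace ℝ (Fin dθ) → EuclideanSpace ℝ (Fin dy))
    (ℓ : EuclideanSpace ℝ (Fin dy) → EuclideanSpace ℝ (Fin dy) → ℝ)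
    (hdiff : ∀ i : Fin m, Differentiable ℝ (fun q => ℓ q (y i)))
    (lam : ℝ) (hlam : 0 < lam)
    (Lt : EuclideanSpace ℝ (Fin dθ) → EuclideanSpace ℝ (Fin dy) → EuclideanSpace ℝ (Fin dy) →
      (Fin dy → EuclideanSpace ℝ (Fin dx)) → ℝ)
    (hLt : ∀ θ a b W, Lt θ a b W =
      (1 / (m : ℝ)) * ∑ i, ℓ (f (x i) θ + addedNeuron dx dy a b W (x i)) (y i)
        + lam * ‖a‖ ^ 2)
    (θ : EuclideanSpace ℝ (Fin dθ)) (a b : EuclideanSpace ℝ (Fin dy))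
    (W : Fin dy → EuclideanSpace ℝ (Fin dx))
    -- all partial derivatives with respect to the coordinates of `a` vanish
    (hpa : ∀ k : Fin dy,
      deriv (fun t : ℝ => Lt θ (WithLp.toLp 2 (Function.update a k t)) b W) (a k) = 0)
    -- all partial derivatives with respect to the coordinates of `b` vanish
    (hpb : ∀ k : Fin dy,
      deriv (fun t : ℝ => Lt θ a (WithLp.toLp 2 (Function.update b k t)) W) (b k) = 0) :
    a = 0 := by
  ext k
  show a k = 0
  set E : Fin m → EuclideanSpace ℝ (Fin dy) :=
    fun i => WithLp.toLp 2 (fun j => if j = k then Real.exp ⟪W k, x i⟫ else 0) with hE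
  set C : Fin m → EuclideanSpace ℝ (Fin dy) :=
    fun i => WithLp.toLp 2 (fun j => if j = k then 0 else a j * Real.exp (⟪W j, x i⟫ + b j)) with hC
  set Q : Fin m → ℝ → EuclideanSpace ℝ (Fin dy) := fun i u => u • E i + C i with hQ
  set F : ℝ → ℝ := fun u => (1 / (m : ℝ)) * ∑ i, ℓ (f (x i) θ + Q i u) (y i) with hF
  have hFdiff : Differentiable ℝ F := by
    apply Differentiable.const_mul
    apply Differentiable.fun_sum
    intro i _
    exact (hdiff i).comp ((differentiable_const _).add
      ((differentiable_id.smul_const (E i)).add_const (C i)))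
  have key1 : ∀ (t : ℝ) (i : Fin m),
      addedNeuron dx dy (WithLp.toLp 2 (Function.update a k t)) b W (x i) = Q i (t * Real.exp (b k)) := by
    intro t i
    ext j
    show Function.update a k t j * Real.exp (⟪W j, x i⟫ + b j) =
      (t * Real.exp (b k)) * E i j + C i j
    by_cases hj : j = k
    · subst hj
      simp only [hE, hC, Function.update_self, if_pos rfl, ↓reduceIte, Real.exp_add]
      ring
    · simp [hE, hC, hj, Function.update_of_ne hj]
  have key2 : ∀ (t : ℝ) (i : Fin m),
      addedNeuron dx dy a (WithLp.toLp 2 (Function.update b k t)) W (x i) = Q i (a k * Real.exp t) := by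
    intro t i
    ext j
    show a j * Real.exp (⟪W j, x i⟫ + Function.update b k t j) =
      (a k * Real.exp t) * E i j + C i j
    by_cases hj : j = k
    · subst hj
      simp only [hE, hC, Function.update_self, if_pos rfl, ↓reduceIte, Real.exp_add]
      ring
    · simp [hE, hC, hj, Function.update_of_ne hj]
  have hsum : ∀ t : ℝ, ∑ j, (Function.update a k t j) ^ 2 =
      t ^ 2 + ∑ j ∈ Finset.univ \ {k}, (a j) ^ 2 := by
    intro t
    have hupd : (fun j => (Function.update a k t j) ^ 2) =
        Function.update (fun j => (a j) ^ 2) k (t ^ 2) := by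
      funext j
      exact Function.apply_update (fun _ v => v ^ 2) a k t j
    calc ∑ j, (Function.update a k t j) ^ 2
        = ∑ j, Function.update (fun j => (a j) ^ 2) k (t ^ 2) j := by rw [hupd]
      _ = t ^ 2 + ∑ j ∈ Finset.univ \ {k}, (a j) ^ 2 :=
          Finset.sum_update_of_mem (Finset.mem_univ k) _ _
  set c : ℝ := a k * Real.exp (b k) with hc
  set d : ℝ := deriv F c with hd
  have hdF : HasDerivAt F d c := (hFdiff c).hasDerivAt
  -- equation from ∂/∂a_k
  have eqa : d * Real.exp (b k) + lam * (2 * a k) = 0 := by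
    have hfun : (fun t : ℝ => Lt θ (WithLp.toLp 2 (Function.update a k t)) b W) =
        fun t => F (t * Real.exp (b k)) +
          lam * (t ^ 2 + ∑ j ∈ Finset.univ \ {k}, (a j) ^ 2) := by
      funext t
      rw [hLt, euclidean_norm_sq_eq_sum, hsum]
      simp only [hF]
      congr 2
      apply Finset.sum_congr rfl
      intro i _
      rw [key1 t i]
    have hinner : HasDerivAt (fun t : ℝ => t * Real.exp (b k)) (Real.exp (b k)) (a k) :=
      hasDerivAt_mul_const _
    have hdF' : HasDerivAt F d (a k * Real.exp (b k)) := by rw [hc] at hdF; exact hdF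
    have h1 : HasDerivAt (fun t : ℝ => F (t * Real.exp (b k)))
        (d * Real.exp (b k)) (a k) := HasDerivAt.comp (h₂ := F) (a k) hdF' hinner
    have h2 : HasDerivAt
        (fun t : ℝ => lam * (t ^ 2 + ∑ j ∈ Finset.univ \ {k}, (a j) ^ 2))
        (lam * (2 * a k)) (a k) := by
      have := ((hasDerivAt_pow 2 (a k)).add_const
        (∑ j ∈ Finset.univ \ {k}, (a j) ^ 2)).const_mul lam
      simpa using this
    have h3 := (h1.fun_add h2).deriv
    rw [← hfun, hpa k] at h3
    linarith [h3]
  -- equation from ∂/∂b_k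
  have eqb : d * c = 0 := by
    have hfun : (fun t : ℝ => Lt θ a (WithLp.toLp 2 (Function.update b k t)) W) =
        fun t => F (a k * Real.exp t) + lam * ‖a‖ ^ 2 := by
      funext t
      rw [hLt]
      simp only [hF]
      congr 2
      apply Finset.sum_congr rfl
      intro i _
      rw [key2 t i]
    have hinner : HasDerivAt (fun t : ℝ => a k * Real.exp t) c (b k) := by
      have := (Real.hasDerivAt_exp (b k)).const_mul (a k)
      simpa [hc, mul_comm] using this
    have hdF' : HasDerivAt F d (a k * Real.exp (b k)) := by rw [hc] at hdF; exact hdF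
    have h1 : HasDerivAt (fun t : ℝ => F (a k * Real.exp t)) (d * c) (b k) :=
      HasDerivAt.comp (h₂ := F) (b k) hdF' hinner
    have h2 := (h1.add_const (lam * ‖a‖ ^ 2)).deriv
    rw [← hfun, hpb k] at h2
    linarith [h2]
  -- combine: multiply eqa by a k and use eqb
  have eqb' : d * (a k * Real.exp (b k)) = 0 := by rw [← hc]; exact eqb
  have hlam2 : lam * (a k) ^ 2 = 0 := by
    linear_combination (a k / 2) * eqa - (1 / 2) * eqb'
  have hsq : (a k) ^ 2 = 0 := by
    rcases mul_eq_zero.mp hlam2 with h | h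
    · exact absurd h hlam.ne'
    · exact h
  exact (pow_eq_zero_iff two_ne_zero).mp hsq
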